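/- arXiv:2104.03563 — 3 statements merged into one kernel-verified Lean document; each statement's English description precedes it below -/
import Mathlib

section
/- With γ(z) = z^{1/2}/((z−a)^{1/4}(z−b)^{1/4}) on ℂ∖[0,b] (branch with γ(z)→1 at ∞) and Ñ(z) the matrix with diagonal entries (γ+γ⁻¹)/2 and off-diagonal entries (γ−γ⁻¹)/(∓2i), the boundary values satisfy: Ñ₊(x) = Ñ₋(x)·[[0,1],[−1,0]] for x ∈ (a,b), and Ñ₊(x) = −Ñ₋(x) for x ∈ (0,a). -/
open Filter Topology

noncomputable def Mgam (g : ℂ) : Matrix (Fin 2) (Fin 2) ℂ :=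
  !![(g + g⁻¹) / 2, (g - g⁻¹) / (-2 * Complex.I);
     (g - g⁻¹) / (2 * Complex.I), (g + g⁻¹) / 2]

lemma Mgam_neg (d : ℂ) : Mgam (-d) = -Mgam d := by
  ext i j
  fin_cases i <;> fin_cases j <;>
    simp [Mgam, Matrix.neg_apply, inv_neg] <;> ring

lemma Mgam_jump (d : ℂ) (hd : d ≠ 0) :
    Mgam (-Complex.I * d) = Mgam d * !![0, 1; -1, 0] := by
  have hI := Complex.I_ne_zero
  have hI2 := Complex.I_sq
  ext i j
  fin_cases i <;> fin_cases j <;>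
    simp [Mgam, Matrix.mul_apply, Fin.sum_univ_succ, mul_inv, inv_neg,
      Complex.inv_I] <;>
    field_simp <;> ring_nf <;>
    simp [Complex.I_sq] <;> ring

lemma tendsto_Mgam {l : Filter ℂ} {γ : ℂ → ℂ} {d : ℂ} (hd : d ≠ 0)
    (h : Tendsto γ l (𝓝 d)) :
    Tendsto (fun z => Mgam (γ z)) l (𝓝 (Mgam d)) := by
  have hg : Tendsto (fun z => (γ z)⁻¹) l (𝓝 d⁻¹) := h.inv₀ hd
  refine tendsto_pi_nhds.mpr ?_; intro i
  rw [tendsto_pi_nhds]; intro j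
  fin_cases i <;> fin_cases j <;> simp only [Mgam] <;>
    simp only [Matrix.cons_val_zero, Matrix.cons_val_one, Matrix.head_cons,
      Matrix.of_apply, Matrix.cons_val', Matrix.head_fin_const, Matrix.empty_val',
      Fin.isValue]
  · exact (h.add hg).div_const _
  · exact (h.sub hg).div_const _
  · exact (h.sub hg).div_const _
  · exact (h.add hg).div_const _

lemma upper_shift (x c : ℝ) :
    Tendsto (fun z : ℂ => z - (c : ℂ)) (𝓝[{z : ℂ | 0 < z.im}] (x : ℂ))
      (𝓝[{z : ℂ | 0 ≤ z.im}] ((x : ℂ) - c)) := by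
  apply tendsto_nhdsWithin_of_tendsto_nhds_of_eventually_within
  · exact ((continuous_id.sub continuous_const).tendsto _).mono_left nhdsWithin_le_nhds
  · filter_upwards [self_mem_nhdsWithin] with z hz
    have hz' : (0 : ℝ) < z.im := hz
    simp only [Set.mem_setOf_eq, Complex.sub_im, Complex.ofReal_im, sub_zero]
    exact hz'.le

lemma lower_shift (x c : ℝ) :
    Tendsto (fun z : ℂ => z - (c : ℂ)) (𝓝[{z : ℂ | z.im < 0}] (x : ℂ))
      (𝓝[{z : ℂ | z.im < 0}] ((x : ℂ) - c)) := by
  apply tendsto_nhdsWithin_of_tendsto_nhds_of_eventually_within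
  · exact ((continuous_id.sub continuous_const).tendsto _).mono_left nhdsWithin_le_nhds
  · filter_upwards [self_mem_nhdsWithin] with z hz
    have hz' : z.im < 0 := hz
    simp only [Set.mem_setOf_eq, Complex.sub_im, Complex.ofReal_im, sub_zero]
    exact hz'

lemma cpow_upper (x c : ℝ) (h : x < c) (r : ℂ) :
    Tendsto (fun z : ℂ => (z - (c : ℂ)) ^ r) (𝓝[{z : ℂ | 0 < z.im}] (x : ℂ))
      (𝓝 (Complex.exp (((Real.log (c - x) : ℂ) + Real.pi * Complex.I) * r))) := by
  have hre : ((x : ℂ) - c).re < 0 := by simp; linarith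
  have him : ((x : ℂ) - c).im = 0 := by simp
  have h1 := (Complex.tendsto_log_nhdsWithin_im_nonneg_of_re_neg_of_im_zero hre him).comp
    (upper_shift x c)
  have habs : ‖(x : ℂ) - c‖ = c - x := by
    rw [← Complex.ofReal_sub, Complex.norm_real, Real.norm_eq_abs, abs_of_neg (by linarith)]
    ring
  rw [habs] at h1
  have h2 := (Complex.continuous_exp.tendsto _).comp (h1.mul_const r)
  apply h2.congr'
  filter_upwards [self_mem_nhdsWithin] with z hz
  have hz0 : z - (c : ℂ) ≠ 0 := by
    intro h0
    have : (z - (c : ℂ)).im = 0 := by rw [h0]; simp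
    simp only [Complex.sub_im, Complex.ofReal_im, sub_zero] at this
    exact absurd this (ne_of_gt hz)
  simp [Function.comp, Complex.cpow_def_of_ne_zero hz0]

lemma cpow_lower (x c : ℝ) (h : x < c) (r : ℂ) :
    Tendsto (fun z : ℂ => (z - (c : ℂ)) ^ r) (𝓝[{z : ℂ | z.im < 0}] (x : ℂ))
      (𝓝 (Complex.exp (((Real.log (c - x) : ℂ) - Real.pi * Complex.I) * r))) := by
  have hre : ((x : ℂ) - c).re < 0 := by simp; linarith
  have him : ((x : ℂ) - c).im = 0 := by simp
  have h1 := (Complex.tendsto_log_nhdsWithin_im_neg_of_re_neg_of_im_zero hre him).comp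
    (lower_shift x c)
  have habs : ‖(x : ℂ) - c‖ = c - x := by
    rw [← Complex.ofReal_sub, Complex.norm_real, Real.norm_eq_abs, abs_of_neg (by linarith)]
    ring
  rw [habs] at h1
  have h2 := (Complex.continuous_exp.tendsto _).comp (h1.mul_const r)
  apply h2.congr'
  filter_upwards [self_mem_nhdsWithin] with z hz
  have hz0 : z - (c : ℂ) ≠ 0 := by
    intro h0
    have : (z - (c : ℂ)).im = 0 := by rw [h0]; simp
    simp only [Complex.sub_im, Complex.ofReal_im, sub_zero] at this
    exact absurd this (ne_of_lt hz)
  simp [Function.comp, Complex.cpow_def_of_ne_zero hz0]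

lemma cpow_cont (x c : ℝ) (h : c < x) (r : ℂ) (s : Set ℂ) :
    Tendsto (fun z : ℂ => (z - (c : ℂ)) ^ r) (𝓝[s] (x : ℂ))
      (𝓝 (((x : ℂ) - c) ^ r)) := by
  have hmem : (x : ℂ) - c ∈ Complex.slitPlane := by
    rw [Complex.mem_slitPlane_iff]
    left; simp; linarith
  have h1 : ContinuousAt (fun z : ℂ => z - (c : ℂ)) x := (continuous_sub_right _).continuousAt
  have : ContinuousAt (fun z : ℂ => (z - (c : ℂ)) ^ r) x :=
    ContinuousAt.comp (g := (· ^ r)) (continuousAt_cpow_const hmem) h1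
  exact this.continuousWithinAt.tendsto

lemma sqrt_cont (x : ℝ) (h : 0 < x) (r : ℂ) (s : Set ℂ) :
    Tendsto (fun z : ℂ => z ^ r) (𝓝[s] (x : ℂ)) (𝓝 ((x : ℂ) ^ r)) := by
  have hmem : (x : ℂ) ∈ Complex.slitPlane := by
    rw [Complex.mem_slitPlane_iff]; left; simpa
  exact (continuousAt_cpow_const hmem).continuousWithinAt.tendsto

lemma neBot_upper (x : ℝ) : (𝓝[{z : ℂ | 0 < z.im}] (x : ℂ)).NeBot := by
  rw [← mem_closure_iff_nhdsWithin_neBot, Metric.mem_closure_iff]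
  intro ε hε
  refine ⟨(x : ℂ) + (ε / 2) * Complex.I, by simp [hε], ?_⟩
  rw [Complex.dist_eq]
  have : (x : ℂ) - ((x : ℂ) + (ε / 2) * Complex.I) = -((ε / 2 : ℝ) * Complex.I) := by
    push_cast; ring
  rw [this, norm_neg, norm_mul, Complex.norm_real, Real.norm_eq_abs, Complex.norm_I]
  rw [abs_of_pos (by linarith)]
  linarith

lemma neBot_lower (x : ℝ) : (𝓝[{z : ℂ | z.im < 0}] (x : ℂ)).NeBot := by
  rw [← mem_closure_iff_nhdsWithin_neBot, Metric.mem_closure_iff]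
  intro ε hε
  refine ⟨(x : ℂ) - (ε / 2) * Complex.I, by simp; positivity, ?_⟩
  rw [Complex.dist_eq]
  have : (x : ℂ) - ((x : ℂ) - (ε / 2) * Complex.I) = (ε / 2 : ℝ) * Complex.I := by
    push_cast; ring
  rw [this, norm_mul, Complex.norm_real, Real.norm_eq_abs, Complex.norm_I]
  rw [abs_of_pos (by linarith)]
  linarith

lemma div_I_mul (u v : ℂ) : u / (Complex.I * v) = -Complex.I * (u / v) := by
  rw [div_eq_mul_inv, mul_inv, Complex.inv_I, div_eq_mul_inv]
  ring

lemma exp_half_pi : Complex.exp (Real.pi * Complex.I / 2) = Complex.I := by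
  have h : (Real.pi : ℂ) * Complex.I / 2 = ((Real.pi / 2 : ℝ) : ℂ) * Complex.I := by
    push_cast; ring
  rw [h, Complex.exp_mul_I, ← Complex.ofReal_cos, ← Complex.ofReal_sin,
    Real.cos_pi_div_two, Real.sin_pi_div_two]
  simp

/-- Jump relations of the global parametrix `Ñ` across `(a,b)` and `(0,a)`:
`Ñ₊ = Ñ₋·[[0,1],[−1,0]]` on `(a,b)` and `Ñ₊ = −Ñ₋` on `(0,a)`. -/
theorem stmt_5 (a b : ℝ) (ha : 0 < a) (hab : a < b)
    (γ : ℂ → ℂ)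
    (hγ : ∀ z : ℂ, γ z = z ^ ((1 : ℂ) / 2)
      / ((z - (a : ℂ)) ^ ((1 : ℂ) / 4) * (z - (b : ℂ)) ^ ((1 : ℂ) / 4)))
    (N : ℂ → Matrix (Fin 2) (Fin 2) ℂ)
    (hN : ∀ z : ℂ, N z =
      !![(γ z + (γ z)⁻¹) / 2, (γ z - (γ z)⁻¹) / (-2 * Complex.I);
         (γ z - (γ z)⁻¹) / (2 * Complex.I), (γ z + (γ z)⁻¹) / 2]) :
    (∀ x ∈ Set.Ioo a b, ∀ Np Nm : Matrix (Fin 2) (Fin 2) ℂ,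
      Tendsto N (nhdsWithin (x : ℂ) {z : ℂ | 0 < z.im}) (nhds Np) →
      Tendsto N (nhdsWithin (x : ℂ) {z : ℂ | z.im < 0}) (nhds Nm) →
      Np = Nm * !![0, 1; -1, 0]) ∧
    (∀ x ∈ Set.Ioo (0 : ℝ) a, ∀ Np Nm : Matrix (Fin 2) (Fin 2) ℂ,
      Tendsto N (nhdsWithin (x : ℂ) {z : ℂ | 0 < z.im}) (nhds Np) →
      Tendsto N (nhdsWithin (x : ℂ) {z : ℂ | z.im < 0}) (nhds Nm) →
      Np = -Nm) := by
  have hNM : ∀ z : ℂ, N z = Mgam (γ z) := fun z => hN z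
  constructor
  · -- x ∈ (a, b)
    rintro x ⟨hax, hxb⟩ Np Nm hhp hhm
    haveI := neBot_upper x
    haveI := neBot_lower x
    set s : ℂ := (x : ℂ) ^ ((1 : ℂ) / 2) with hs
    set p : ℂ := ((x : ℂ) - a) ^ ((1 : ℂ) / 4) with hp
    set qm : ℂ := Complex.exp (((Real.log (b - x) : ℂ) - Real.pi * Complex.I) * (1 / 4)) with hqm
    set qp : ℂ := Complex.exp (((Real.log (b - x) : ℂ) + Real.pi * Complex.I) * (1 / 4)) with hqp
    have hx0 : (0 : ℝ) < x := lt_trans ha hax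
    have hs0 : s ≠ 0 := by
      rw [hs, Ne, Complex.cpow_eq_zero_iff]
      push_neg
      intro h0
      exact absurd (by exact_mod_cast h0) (ne_of_gt hx0)
    have hp0 : p ≠ 0 := by
      rw [hp, Ne, Complex.cpow_eq_zero_iff]
      push_neg
      intro h0
      exfalso
      have : (x : ℝ) - a = 0 := by
        have := congrArg Complex.re h0
        simpa using this
      linarith
    have hqm0 : qm ≠ 0 := Complex.exp_ne_zero _
    have hqp0 : qp ≠ 0 := Complex.exp_ne_zero _
    set d : ℂ := s / (p * qm) with hd
    have hd0 : d ≠ 0 := by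
      rw [hd]
      exact div_ne_zero hs0 (mul_ne_zero hp0 hqm0)
    have hqpm : qp = Complex.I * qm := by
      rw [hqp, hqm, show ((Real.log (b - x) : ℂ) + Real.pi * Complex.I) * (1 / 4)
          = Real.pi * Complex.I / 2
            + ((Real.log (b - x) : ℂ) - Real.pi * Complex.I) * (1 / 4) by ring,
        Complex.exp_add, exp_half_pi]
    -- limit of γ from below
    have hγm : Tendsto γ (𝓝[{z : ℂ | z.im < 0}] (x : ℂ)) (𝓝 d) := by
      have h1 := sqrt_cont x hx0 ((1 : ℂ)/2) {z : ℂ | z.im < 0}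
      have h2 := cpow_cont x a hax ((1 : ℂ)/4) {z : ℂ | z.im < 0}
      have h3 := cpow_lower x b hxb ((1 : ℂ)/4)
      have := h1.div (h2.mul h3) (mul_ne_zero hp0 hqm0)
      exact this.congr fun z => (hγ z).symm
    have hγp : Tendsto γ (𝓝[{z : ℂ | 0 < z.im}] (x : ℂ)) (𝓝 (-Complex.I * d)) := by
      have h1 := sqrt_cont x hx0 ((1 : ℂ)/2) {z : ℂ | 0 < z.im}
      have h2 := cpow_cont x a hax ((1 : ℂ)/4) {z : ℂ | 0 < z.im}
      have h3 := cpow_upper x b hxb ((1 : ℂ)/4)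
      have h4 := h1.div (h2.mul h3) (mul_ne_zero hp0 hqp0)
      have heq : s / (p * qp) = -Complex.I * d := by
        rw [hqpm, hd, show p * (Complex.I * qm) = Complex.I * (p * qm) by ring, div_I_mul]
      rw [← heq]
      exact h4.congr fun z => (hγ z).symm
    have hNp : Np = Mgam (-Complex.I * d) := by
      refine tendsto_nhds_unique hhp ?_
      have := tendsto_Mgam (by simpa using mul_ne_zero Complex.I_ne_zero hd0 : -Complex.I * d ≠ 0) hγp
      exact this.congr fun z => (hNM z).symm
    have hNm : Nm = Mgam d := by
      refine tendsto_nhds_unique hhm ?_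
      exact (tendsto_Mgam hd0 hγm).congr fun z => (hNM z).symm
    rw [hNp, hNm]
    exact Mgam_jump d hd0
  · -- x ∈ (0, a)
    rintro x ⟨hx0, hxa⟩ Np Nm hhp hhm
    haveI := neBot_upper x
    haveI := neBot_lower x
    set s : ℂ := (x : ℂ) ^ ((1 : ℂ) / 2) with hs
    set pm : ℂ := Complex.exp (((Real.log (a - x) : ℂ) - Real.pi * Complex.I) * (1 / 4)) with hpm
    set pp : ℂ := Complex.exp (((Real.log (a - x) : ℂ) + Real.pi * Complex.I) * (1 / 4)) with hpp
    set qm : ℂ := Complex.exp (((Real.log (b - x) : ℂ) - Real.pi * Complex.I) * (1 / 4)) with hqm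
    set qp : ℂ := Complex.exp (((Real.log (b - x) : ℂ) + Real.pi * Complex.I) * (1 / 4)) with hqp
    have hxb : x < b := lt_trans hxa hab
    have hs0 : s ≠ 0 := by
      rw [hs, Ne, Complex.cpow_eq_zero_iff]
      push_neg
      intro h0
      exact absurd (by exact_mod_cast h0) (ne_of_gt hx0)
    have hpm0 : pm ≠ 0 := Complex.exp_ne_zero _
    have hpp0 : pp ≠ 0 := Complex.exp_ne_zero _
    have hqm0 : qm ≠ 0 := Complex.exp_ne_zero _
    have hqp0 : qp ≠ 0 := Complex.exp_ne_zero _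
    set d : ℂ := s / (pm * qm) with hd
    have hd0 : d ≠ 0 := div_ne_zero hs0 (mul_ne_zero hpm0 hqm0)
    have hppm : pp = Complex.I * pm := by
      rw [hpp, hpm, show ((Real.log (a - x) : ℂ) + Real.pi * Complex.I) * (1 / 4)
          = Real.pi * Complex.I / 2
            + ((Real.log (a - x) : ℂ) - Real.pi * Complex.I) * (1 / 4) by ring,
        Complex.exp_add, exp_half_pi]
    have hqpm : qp = Complex.I * qm := by
      rw [hqp, hqm, show ((Real.log (b - x) : ℂ) + Real.pi * Complex.I) * (1 / 4)
          = Real.pi * Complex.I / 2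
            + ((Real.log (b - x) : ℂ) - Real.pi * Complex.I) * (1 / 4) by ring,
        Complex.exp_add, exp_half_pi]
    have hγm : Tendsto γ (𝓝[{z : ℂ | z.im < 0}] (x : ℂ)) (𝓝 d) := by
      have h1 := sqrt_cont x hx0 ((1 : ℂ)/2) {z : ℂ | z.im < 0}
      have h2 := cpow_lower x a hxa ((1 : ℂ)/4)
      have h3 := cpow_lower x b hxb ((1 : ℂ)/4)
      have := h1.div (h2.mul h3) (mul_ne_zero hpm0 hqm0)
      exact this.congr fun z => (hγ z).symm
    have hγp : Tendsto γ (𝓝[{z : ℂ | 0 < z.im}] (x : ℂ)) (𝓝 (-d)) := by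
      have h1 := sqrt_cont x hx0 ((1 : ℂ)/2) {z : ℂ | 0 < z.im}
      have h2 := cpow_upper x a hxa ((1 : ℂ)/4)
      have h3 := cpow_upper x b hxb ((1 : ℂ)/4)
      have h4 := h1.div (h2.mul h3) (mul_ne_zero hpp0 hqp0)
      have heq : s / (pp * qp) = -d := by
        rw [hppm, hqpm, hd, show Complex.I * pm * (Complex.I * qm)
            = Complex.I * Complex.I * (pm * qm) by ring, Complex.I_mul_I,
          neg_one_mul, div_neg]
      rw [← heq]
      exact h4.congr fun z => (hγ z).symm
    have hNp : Np = Mgam (-d) := by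
      refine tendsto_nhds_unique hhp ?_
      exact (tendsto_Mgam (neg_ne_zero.mpr hd0) hγp).congr fun z => (hNM z).symm
    have hNm : Nm = Mgam d := by
      refine tendsto_nhds_unique hhm ?_
      exact (tendsto_Mgam hd0 hγm).congr fun z => (hNM z).symm
    rw [hNp, hNm]
    exact Mgam_neg d
end

section
/- As z → ∞, the Szegő function D(z) = ((√a+√b)z/(z + √(ab) + √((z−a)(z−b))))^{α−1/2} satisfies D(z) = D_∞ (1 + (2α−1)(a+b−2√(ab))/(8z) + O(1/z²)), where D_∞ = ((√a+√b)/2)^{α−1/2}. -/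
open Complex Real

lemma aux_arg_mem {z w : ℂ} (hz : z ≠ 0) (hw : w ≠ 0)
    (h0 : z.im = 0 → w.arg = 0)
    (hp : 0 < z.im → 0 < w.im ∧ 0 < (z*w).im)
    (hn : z.im < 0 → w.im < 0 ∧ (z*w).im < 0) :
    z.arg + w.arg ∈ Set.Ioc (-π) π := by
  have hpi := Real.pi_pos
  have key : ∃ k : ℤ, (z*w).arg - (z.arg + w.arg) = 2*π*k := by
    have h1 := Complex.arg_mul_coe_angle hz hw
    rw [← Real.Angle.coe_add, Real.Angle.angle_eq_iff_two_pi_dvd_sub] at h1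
    exact h1
  obtain ⟨k, hk⟩ := key
  rcases lt_trichotomy z.im 0 with h | h | h
  · obtain ⟨hw1, hzw1⟩ := hn h
    have a1 : z.arg < 0 := Complex.arg_neg_iff.2 h
    have a2 : w.arg < 0 := Complex.arg_neg_iff.2 hw1
    have a3 : (z*w).arg < 0 := Complex.arg_neg_iff.2 hzw1
    have b1 := Complex.neg_pi_lt_arg z
    have b2 := Complex.neg_pi_lt_arg w
    have b3 := Complex.neg_pi_lt_arg (z*w)
    have hk0 : k = 0 := by
      have h1 : (k:ℝ) < 1 := by nlinarith
      have h2 : (-1:ℝ) < k := by nlinarith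
      have h1' : k < 1 := by exact_mod_cast h1
      have h2' : (-1:ℤ) < k := by exact_mod_cast h2
      omega
    rw [hk0] at hk
    simp at hk
    constructor <;> nlinarith
  · rw [h0 h]
    simp
    exact ⟨Complex.neg_pi_lt_arg z, Complex.arg_le_pi z⟩
  · obtain ⟨hw1, hzw1⟩ := hp h
    have a1 : 0 < z.arg := by
      rcases (Complex.arg_nonneg_iff.2 h.le).lt_or_eq with h' | h'
      · exact h'
      · exfalso; have := Complex.arg_eq_zero_iff.1 h'.symm; linarith [this.2]
    have a2 : 0 < w.arg := by
      rcases (Complex.arg_nonneg_iff.2 hw1.le).lt_or_eq with h' | h'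
      · exact h'
      · exfalso; have := Complex.arg_eq_zero_iff.1 h'.symm; linarith [this.2]
    have a3 : 0 < (z*w).arg := by
      rcases (Complex.arg_nonneg_iff.2 hzw1.le).lt_or_eq with h' | h'
      · exact h'
      · exfalso; have := Complex.arg_eq_zero_iff.1 h'.symm; linarith [this.2]
    have b1 := Complex.arg_le_pi z
    have b2 := Complex.arg_le_pi w
    have b3 := Complex.arg_le_pi (z*w)
    have hk0 : k = 0 := by
      have h1 : (k:ℝ) < 1 := by nlinarith
      have h2 : (-1:ℝ) < k := by nlinarith
      have h1' : k < 1 := by exact_mod_cast h1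
      have h2' : (-1:ℤ) < k := by exact_mod_cast h2
      omega
    rw [hk0] at hk
    simp at hk
    constructor <;> nlinarith

lemma aux_log_mul {z w : ℂ} (hz : z ≠ 0) (hw : w ≠ 0)
    (h0 : z.im = 0 → w.arg = 0)
    (hp : 0 < z.im → 0 < w.im ∧ 0 < (z*w).im)
    (hn : z.im < 0 → w.im < 0 ∧ (z*w).im < 0) :
    Complex.log (z * w) = Complex.log z + Complex.log w :=
  Complex.log_mul hz hw (aux_arg_mem hz hw h0 hp hn)

lemma cpow_half_split {c : ℝ} {z : ℂ} (hc : 0 < c) (hz : c < ‖z‖) :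
    (z - (c:ℂ)) ^ ((1:ℂ)/2) = z ^ ((1:ℂ)/2) * (1 - (c:ℂ)*z⁻¹) ^ ((1:ℂ)/2) := by
  have hz0 : z ≠ 0 := by
    intro h; rw [h] at hz; simp at hz; linarith
  set w : ℂ := 1 - (c:ℂ)*z⁻¹ with hwdef
  have hns : 0 < Complex.normSq z := Complex.normSq_pos.2 hz0
  have hznorm : 0 < ‖z‖ := lt_trans hc hz
  have hsmall : ‖(c:ℂ)*z⁻¹‖ < 1 := by
    rw [norm_mul, norm_inv, Complex.norm_real, Real.norm_of_nonneg hc.le]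
    have := (div_lt_one hznorm).2 hz
    rwa [div_eq_mul_inv] at this
  have hre : 0 < w.re := by
    have : |((c:ℂ)*z⁻¹).re| ≤ ‖(c:ℂ)*z⁻¹‖ := Complex.abs_re_le_norm _
    have h2 : w.re = 1 - ((c:ℂ)*z⁻¹).re := by simp [hwdef]
    rw [h2]
    have h3 := le_abs_self (((c:ℂ)*z⁻¹).re)
    linarith
  have hw0 : w ≠ 0 := by
    intro h
    rw [h] at hre; simp at hre
  have him : w.im = c * z.im / Complex.normSq z := by
    simp [hwdef, Complex.inv_im]
    ring
  have hzw : z * w = z - (c:ℂ) := by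
    rw [hwdef, mul_sub, mul_one, mul_left_comm, mul_inv_cancel₀ hz0, mul_one]
  have hzwim : (z*w).im = z.im := by rw [hzw]; simp
  have hlog : Complex.log (z * w) = Complex.log z + Complex.log w := by
    apply aux_log_mul hz0 hw0
    · intro h
      apply Complex.arg_eq_zero_iff.2
      constructor
      · exact hre.le
      · rw [him, h]; simp
    · intro h
      constructor
      · rw [him]; positivity
      · rw [hzwim]; exact h
    · intro h
      refine ⟨?_, by rw [hzwim]; exact h⟩
      rw [him]
      have : c * z.im < 0 := mul_neg_of_pos_of_neg hc h
      exact div_neg_of_neg_of_pos this hns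
  have hzw0 : z * w ≠ 0 := mul_ne_zero hz0 hw0
  rw [← hzw, Complex.cpow_def_of_ne_zero hzw0, Complex.cpow_def_of_ne_zero hz0,
    Complex.cpow_def_of_ne_zero hw0, hlog, add_mul, Complex.exp_add]

lemma sqrt_prod_split {a b : ℝ} {z : ℂ} (ha : 0 < a) (hab : a < b) (hz : b < ‖z‖) :
    (z - (a:ℂ))^((1:ℂ)/2) * (z - (b:ℂ))^((1:ℂ)/2)
      = z * ((1 - (a:ℂ)*z⁻¹)^((1:ℂ)/2) * (1 - (b:ℂ)*z⁻¹)^((1:ℂ)/2)) := by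
  have hb : 0 < b := ha.trans hab
  have hz0 : z ≠ 0 := by
    intro h; rw [h] at hz; simp at hz; linarith
  rw [cpow_half_split ha (hab.trans hz), cpow_half_split hb hz, mul_mul_mul_comm,
    ← Complex.cpow_add _ _ hz0]
  norm_num

lemma base_eq (Sc rc z Q : ℂ) (hz : z ≠ 0) :
    Sc * z / (z + rc + z*Q) = Sc / (1 + rc*z⁻¹ + Q) := by
  rw [show z + rc + z*Q = z * (1 + rc*z⁻¹ + Q) by field_simp,
    show Sc*z = z*Sc by ring, mul_div_mul_left _ _ hz]

/-- Asymptotics of the Szegő function: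
`D(z) = D_∞ (1 + (2α−1)(a+b−2√(ab))/(8z) + O(1/z²))` as `z → ∞`,
where `D_∞ = ((√a+√b)/2)^{α−1/2}`. -/
theorem stmt_7 (a b α : ℝ) (ha : 0 < a) (hab : a < b)
    (D : ℂ → ℂ)
    (hD : ∀ z : ℂ, D z =
      (((Real.sqrt a + Real.sqrt b : ℝ) : ℂ) * z /
        (z + ((Real.sqrt (a * b) : ℝ) : ℂ)
          + (z - (a : ℂ)) ^ ((1 : ℂ) / 2) * (z - (b : ℂ)) ^ ((1 : ℂ) / 2)))
        ^ ((α : ℂ) - 1 / 2)) :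
    ∃ C R : ℝ, 0 < C ∧ ∀ z : ℂ, R ≤ ‖z‖ →
      ‖D z - ((((Real.sqrt a + Real.sqrt b) / 2) ^ (α - 1 / 2) : ℝ) : ℂ)
          * (1 + (((2 * α - 1) * (a + b - 2 * Real.sqrt (a * b)) : ℝ) : ℂ) / (8 * z))‖
        ≤ C / ‖z‖ ^ 2 := by
  have hb : 0 < b := ha.trans hab
  set S : ℝ := Real.sqrt a + Real.sqrt b with hSdef
  set r : ℝ := Real.sqrt (a*b) with hrdef
  have hS : 0 < S := by positivity
  set q : ℂ → ℂ := fun u => (1 - (a:ℂ)*u)^((1:ℂ)/2) * (1 - (b:ℂ)*u)^((1:ℂ)/2) with hqdef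
  set d : ℂ → ℂ := fun u => 1 + (r:ℂ)*u + q u with hddef
  set g : ℂ → ℂ := fun u => ((S:ℂ) / d u)^((α:ℂ) - 1/2) with hgdef
  have hd0 : d 0 = 2 := by
    simp [hddef, hqdef, Complex.one_cpow]
    norm_num
  -- derivative of g at 0
  have h1a : HasDerivAt (fun u : ℂ => 1 - (a:ℂ)*u) (-(a:ℂ)) 0 := by
    simpa using ((hasDerivAt_id (0:ℂ)).const_mul (a:ℂ)).const_sub 1
  have h1b : HasDerivAt (fun u : ℂ => 1 - (b:ℂ)*u) (-(b:ℂ)) 0 := by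
    simpa using ((hasDerivAt_id (0:ℂ)).const_mul (b:ℂ)).const_sub 1
  have hmem : ∀ c : ℝ, (fun u : ℂ => 1 - (c:ℂ)*u) 0 ∈ Complex.slitPlane := by
    intro c; simp [Complex.one_mem_slitPlane]
  have h2a : HasDerivAt (fun u : ℂ => (1 - (a:ℂ)*u)^((1:ℂ)/2)) (-(a:ℂ)/2) 0 := by
    have := h1a.cpow_const (c := (1:ℂ)/2) (hmem a)
    convert this using 1
    simp [Complex.one_cpow]
    ring
  have h2b : HasDerivAt (fun u : ℂ => (1 - (b:ℂ)*u)^((1:ℂ)/2)) (-(b:ℂ)/2) 0 := by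
    have := h1b.cpow_const (c := (1:ℂ)/2) (hmem b)
    convert this using 1
    simp [Complex.one_cpow]
    ring
  have h3 : HasDerivAt q (-(a:ℂ)/2 + -(b:ℂ)/2) 0 := by
    have : HasDerivAt q (-(a:ℂ)/2 * (1 - (b:ℂ)*0)^((1:ℂ)/2) + (1 - (a:ℂ)*0)^((1:ℂ)/2) * (-(b:ℂ)/2)) 0 :=
      h2a.fun_mul h2b
    convert this using 1
    simp [Complex.one_cpow]
  have hlin : HasDerivAt (fun u : ℂ => 1 + (r:ℂ)*u) ((r:ℂ)) 0 := by
    simpa using ((hasDerivAt_id (0:ℂ)).const_mul (r:ℂ)).const_add 1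
  have h4 : HasDerivAt d ((r:ℂ) + (-(a:ℂ)/2 + -(b:ℂ)/2)) 0 := hlin.add h3
  have hd0ne : d 0 ≠ 2 → False := fun h => h hd0
  have h5 : HasDerivAt (fun u => (S:ℂ) / d u)
      ((0 * d 0 - (S:ℂ) * ((r:ℂ) + (-(a:ℂ)/2 + -(b:ℂ)/2))) / (d 0)^2) 0 :=
    (hasDerivAt_const 0 ((S:ℂ))).div h4 (by rw [hd0]; norm_num)
  have hSd0 : (S:ℂ) / d 0 = (S:ℂ)/2 := by rw [hd0]
  have hS2mem : ((S:ℂ)/2) ∈ Complex.slitPlane := by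
    rw [Complex.mem_slitPlane_iff]
    left
    simp
    positivity
  have h6 : HasDerivAt g (((α:ℂ) - 1/2) * ((S:ℂ)/d 0)^(((α:ℂ) - 1/2) - 1) *
      ((0 * d 0 - (S:ℂ) * ((r:ℂ) + (-(a:ℂ)/2 + -(b:ℂ)/2))) / (d 0)^2)) 0 :=
    h5.cpow_const (c := (α:ℂ) - 1/2) (by show (S:ℂ)/d 0 ∈ _; rw [hSd0]; exact hS2mem)
  set g0 : ℂ := ((S:ℂ)/2)^((α:ℂ) - 1/2) with hg0def
  set Xc : ℂ := (((2 * α - 1) * (a + b - 2 * r) : ℝ) : ℂ) with hXcdef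
  have hS2ne : ((S:ℂ)/2) ≠ 0 := by
    simp only [ne_eq, div_eq_zero_iff]
    push_neg
    constructor
    · exact_mod_cast hS.ne'
    · norm_num
  have hkey : deriv g 0 = g0 * Xc / 8 := by
    rw [h6.deriv, hd0, hg0def, hXcdef, Complex.cpow_sub _ _ hS2ne, Complex.cpow_one]
    push_cast
    have hSne : (S:ℂ) ≠ 0 := by exact_mod_cast hS.ne'
    field_simp
    ring
  -- analyticity
  have ga : AnalyticAt ℂ g 0 := by
    have a0 : AnalyticAt ℂ (fun u : ℂ => u) 0 := analyticAt_id
    have a1 : AnalyticAt ℂ (fun u : ℂ => 1 - (a:ℂ)*u) 0 :=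
      analyticAt_const.sub (analyticAt_const.mul a0)
    have a1b : AnalyticAt ℂ (fun u : ℂ => 1 - (b:ℂ)*u) 0 :=
      analyticAt_const.sub (analyticAt_const.mul a0)
    have a2 : AnalyticAt ℂ (fun u : ℂ => (1 - (a:ℂ)*u)^((1:ℂ)/2)) 0 :=
      a1.cpow analyticAt_const (hmem a)
    have a2b : AnalyticAt ℂ (fun u : ℂ => (1 - (b:ℂ)*u)^((1:ℂ)/2)) 0 :=
      a1b.cpow analyticAt_const (hmem b)
    have a3 : AnalyticAt ℂ d 0 :=
      (analyticAt_const.add (analyticAt_const.mul a0)).add (a2.mul a2b)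
    have a4 : AnalyticAt ℂ (fun u => (S:ℂ) / d u) 0 :=
      analyticAt_const.div a3 (by rw [hd0]; norm_num)
    exact a4.cpow analyticAt_const (by show (S:ℂ)/d 0 ∈ _; rw [hSd0]; exact hS2mem)
  obtain ⟨p, hp⟩ := ga
  have hps : ∀ y : ℂ, p.partialSum 2 y = g 0 + y * (g0 * Xc / 8) := by
    intro y
    have c0 : p.coeff 0 = g 0 := by
      rw [FormalMultilinearSeries.coeff]
      exact hp.coeff_zero 1
    have c1 : p.coeff 1 = g0 * Xc / 8 := (hp.deriv).symm.trans hkey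
    rw [FormalMultilinearSeries.partialSum]
    rw [Finset.sum_range_succ, Finset.sum_range_one]
    rw [p.apply_eq_pow_smul_coeff, p.apply_eq_pow_smul_coeff, c0, c1]
    simp [smul_eq_mul]
  have hO := hp.isBigO_sub_partialSum_pow 2
  rw [Asymptotics.isBigO_iff] at hO
  obtain ⟨C, hC⟩ := hO
  rw [Metric.eventually_nhds_iff] at hC
  obtain ⟨ε, hε, hball⟩ := hC
  refine ⟨max C 1, max (b+1) (2/ε), lt_of_lt_of_le one_pos (le_max_right _ _), ?_⟩
  intro z hzR
  have hzb : b < ‖z‖ := lt_of_lt_of_le (by linarith [le_max_left (b+1) (2/ε)]) hzR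
  have hz0 : z ≠ 0 := by
    intro h; rw [h] at hzb; simp at hzb; linarith
  have hznorm : 0 < ‖z‖ := lt_trans hb hzb
  have hu : dist z⁻¹ 0 < ε := by
    rw [dist_zero_right, norm_inv]
    have h1 : 2/ε ≤ ‖z‖ := le_trans (le_max_right _ _) hzR
    have h2 : 0 < 2/ε := by positivity
    calc ‖z‖⁻¹ ≤ (2/ε)⁻¹ := by
          apply inv_anti₀ h2 h1
      _ = ε/2 := by field_simp
      _ < ε := by linarith
  -- D z = g z⁻¹
  have hDg : D z = g z⁻¹ := by
    rw [hD z, hgdef]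
    congr 1
    rw [sqrt_prod_split ha hab hzb]
    exact base_eq _ _ _ _ hz0
  -- target equals g 0 + z⁻¹ * (g0 * Xc/8)
  have hg0val : g 0 = g0 := by
    show ((S:ℂ)/d 0)^((α:ℂ) - 1/2) = g0
    rw [hd0]
  have hg0real : (((S / 2) ^ (α - 1 / 2) : ℝ) : ℂ) = g0 := by
    rw [hg0def, Complex.ofReal_cpow (by positivity)]
    push_cast
    ring_nf
  have htarget : (((S / 2) ^ (α - 1 / 2) : ℝ) : ℂ)
      * (1 + (((2 * α - 1) * (a + b - 2 * r) : ℝ) : ℂ) / (8 * z))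
      = g 0 + z⁻¹ * (g0 * Xc / 8) := by
    rw [hg0real, hg0val, ← hXcdef]
    field_simp
  rw [hDg, htarget]
  calc ‖g z⁻¹ - (g 0 + z⁻¹ * (g0 * Xc / 8))‖
      = ‖g (0 + z⁻¹) - p.partialSum 2 z⁻¹‖ := by rw [zero_add, hps]
    _ ≤ C * ‖‖z⁻¹‖^2‖ := hball hu
    _ ≤ max C 1 / ‖z‖^2 := by
        rw [Real.norm_of_nonneg (by positivity), norm_inv, inv_pow, ← div_eq_mul_inv]
        gcongr
        exact le_max_left C 1
end

section
/- Let ρ be a probability density on [0,b] which equals 1/(2√x) on (0,a) for some 0 < a < b, and g(z) = ∫₀^b log(z−s) ρ(s) ds. Then for x ∈ (0,a), the boundary values satisfy g±(x) = ∫₀^b log|x−s| ρ(s) ds ± πi(1 − √x). -/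
open MeasureTheory intervalIntegral Set Filter Topology
open scoped Interval

lemma aux_log_int (c : ℝ) (hc : 0 ≤ c) : IntervalIntegrable Real.log volume 0 c := by
  have hmaj : IntervalIntegrable (fun t : ℝ => 2 * t ^ (-(1:ℝ)/2) + c) volume 0 c :=
    ((intervalIntegrable_rpow' (by norm_num)).const_mul 2).add intervalIntegrable_const
  rw [intervalIntegrable_iff, uIoc_of_le hc] at *
  refine MeasureTheory.Integrable.mono hmaj Real.measurable_log.aestronglyMeasurable ?_
  refine (ae_restrict_iff' measurableSet_Ioc).2 (Filter.Eventually.of_forall fun t ht => ?_)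
  obtain ⟨ht0, htc⟩ := ht
  have hu : (0:ℝ) < t ^ (-(1:ℝ)/2) := Real.rpow_pos_of_pos ht0 _
  have h1 : Real.log (t ^ (-(1:ℝ)/2)) ≤ t ^ (-(1:ℝ)/2) - 1 := Real.log_le_sub_one_of_pos hu
  have h2 : Real.log (t ^ (-(1:ℝ)/2)) = (-(1:ℝ)/2) * Real.log t := Real.log_rpow ht0 _
  have h3 : Real.log t ≤ t - 1 := Real.log_le_sub_one_of_pos ht0
  have h4 : ‖2 * t ^ (-(1:ℝ)/2) + c‖ = 2 * t ^ (-(1:ℝ)/2) + c := by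
    rw [Real.norm_eq_abs, abs_of_nonneg]; positivity
  rw [Real.norm_eq_abs, h4]
  rw [abs_le]
  constructor <;> nlinarith

lemma aux_logabs_int {x b : ℝ} (hx0 : 0 < x) (hxb : x < b) :
    IntervalIntegrable (fun s => Real.log |x - s|) volume 0 b := by
  have h1 : IntervalIntegrable (fun s => Real.log |x - s|) volume 0 x := by
    have h := ((aux_log_int x hx0.le).comp_sub_left x).symm
    simp only [sub_zero, sub_self] at h
    refine h.congr ?_
    intro s hs
    rw [uIoc_of_le hx0.le] at hs
    simp only []
    rw [abs_of_nonneg (by linarith [hs.2] : (0:ℝ) ≤ x - s)]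
  have h2 : IntervalIntegrable (fun s => Real.log |x - s|) volume x b := by
    have h := (aux_log_int (b - x) (by linarith)).comp_sub_right x
    simp only [zero_add, sub_add_cancel] at h
    refine h.congr ?_
    intro s hs
    rw [uIoc_of_le (by linarith : x ≤ b)] at hs
    simp only []
    rw [abs_of_nonpos (by linarith [hs.1] : x - s ≤ 0), neg_sub]
  exact h1.trans h2

lemma aux_sqrt_integral (x : ℝ) (hx : 0 < x) :
    (∫ s in (0:ℝ)..x, 1 / (2 * Real.sqrt s)) = Real.sqrt x ∧
    IntervalIntegrable (fun s => 1 / (2 * Real.sqrt s)) volume 0 x := by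
  have hint : IntervalIntegrable (fun s => 1 / (2 * Real.sqrt s)) volume 0 x := by
    refine (intervalIntegrable_rpow' (r := -(1:ℝ)/2) (by norm_num)).mono_fun ?_ ?_
    · exact (measurable_const.div (measurable_const.mul Real.continuous_sqrt.measurable)).aestronglyMeasurable
    · refine (ae_restrict_iff' measurableSet_uIoc).2 (Filter.Eventually.of_forall fun s hs => ?_)
      rw [uIoc_of_le hx.le] at hs
      have hs0 : 0 < s := hs.1
      have h1 : Real.sqrt s > 0 := Real.sqrt_pos.2 hs0
      have h2 : s ^ (-(1:ℝ)/2) = (Real.sqrt s)⁻¹ := by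
        rw [Real.sqrt_eq_rpow, ← Real.rpow_neg hs0.le]; norm_num
      simp only [Real.norm_eq_abs, h2]
      rw [abs_of_nonneg (by positivity), abs_of_nonneg (by positivity)]
      rw [one_div, inv_le_inv₀ (by positivity) h1]
      linarith
  have := integral_eq_sub_of_hasDerivAt_of_le hx.le Real.continuous_sqrt.continuousOn
    (fun s hs => Real.hasDerivAt_sqrt hs.1.ne') hint
  exact ⟨by simpa using this, hint⟩

lemma aux_key (a b : ℝ) (ha : 0 < a) (hab : a < b) (ρ : ℝ → ℝ)
    (hρint : IntervalIntegrable ρ MeasureTheory.volume 0 b)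
    (hρpos : ∀ s ∈ Set.Icc (0 : ℝ) b, 0 ≤ ρ s)
    (hρmass : (∫ s in (0 : ℝ)..b, ρ s) = 1)
    (hρsat : ∀ x ∈ Set.Ioo (0 : ℝ) a, ρ x = 1 / (2 * Real.sqrt x))
    (g : ℂ → ℂ)
    (hg : ∀ z : ℂ, g z = ∫ s in (0 : ℝ)..b, Complex.log (z - (s : ℂ)) * (ρ s : ℂ))
    (x : ℝ) (hx0 : 0 < x) (hxa : x < a) :
    Tendsto (fun ε : ℝ => g ((x:ℂ) + ε * Complex.I)) (𝓝[>] (0:ℝ))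
      (𝓝 (((∫ s in (0 : ℝ)..b, Real.log |x - s| * ρ s : ℝ) : ℂ)
        + (Real.pi : ℂ) * Complex.I * ((1 - Real.sqrt x : ℝ) : ℂ))) := by
  have hxb : x < b := hxa.trans hab
  have hb0 : (0:ℝ) < b := hx0.trans hxb
  -- tail mass
  have hρ0x : IntervalIntegrable ρ volume 0 x :=
    hρint.mono_set (by rw [uIcc_of_le hb0.le, uIcc_of_le hx0.le]; exact Icc_subset_Icc le_rfl hxb.le)
  have hρxb : IntervalIntegrable ρ volume x b :=
    hρint.mono_set (by rw [uIcc_of_le hb0.le, uIcc_of_le hxb.le]; exact Icc_subset_Icc hx0.le le_rfl)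
  have hhead : (∫ s in (0:ℝ)..x, ρ s) = Real.sqrt x := by
    rw [← (aux_sqrt_integral x hx0).1]
    refine intervalIntegral.integral_congr_ae ?_
    refine Filter.Eventually.of_forall fun s hs => ?_
    rw [uIoc_of_le hx0.le] at hs
    exact hρsat s ⟨hs.1, lt_of_le_of_lt hs.2 hxa⟩
  have htail : (∫ s in x..b, ρ s) = 1 - Real.sqrt x := by
    have := intervalIntegral.integral_add_adjacent_intervals hρ0x hρxb
    rw [hρmass] at this; rw [← this, hhead]; ring
  -- constants
  set δ : ℝ := min (x/2) ((a - x)/2) with hδdef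
  have hδ0 : 0 < δ := lt_min (by linarith) (by linarith)
  have hδx : 0 < x - δ := by
    have : δ ≤ x/2 := min_le_left _ _
    linarith
  have hδa : x + δ < a := by
    have : δ ≤ (a - x)/2 := min_le_right _ _
    linarith
  set M : ℝ := 1 / (2 * Real.sqrt (x - δ)) with hM
  have hM0 : 0 < M := by
    have := Real.sqrt_pos.2 hδx
    positivity
  set B : ℝ := Real.log (b + 1) with hB
  have hB0 : 0 ≤ B := Real.log_nonneg (by linarith)
  set C : ℝ := B + Real.pi with hC
  have hC0 : 0 ≤ C := by have := Real.pi_pos; linarith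
  set K : ℝ := |Real.log δ| + B with hK
  have hK0 : 0 ≤ K := by positivity
  set bound : ℝ → ℝ := fun s => M * abs (Real.log (abs (x - s))) + (K + C) * abs (ρ s) with hbound_def
  -- core inequality
  have hxsb : ∀ s ∈ Ioc (0:ℝ) b, |x - s| ≤ b := fun s hs =>
    abs_le.2 ⟨by linarith [hs.2], by linarith [hs.1]⟩
  have hcore : ∀ s ∈ Ioc (0:ℝ) b, (|Real.log (|x - s|)| + C) * |ρ s| ≤ bound s := by
    intro s hs
    by_cases hmem : s ∈ Ioo (x - δ) (x + δ)
    · have hsa : s ∈ Ioo (0:ℝ) a := ⟨by linarith [hmem.1], by linarith [hmem.2]⟩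
      have hρs : ρ s = 1 / (2 * Real.sqrt s) := hρsat s hsa
      have hsq : Real.sqrt (x - δ) ≤ Real.sqrt s := Real.sqrt_le_sqrt (by linarith [hmem.1])
      have hsq0 : 0 < Real.sqrt (x - δ) := Real.sqrt_pos.2 hδx
      have hρle : |ρ s| ≤ M := by
        rw [hρs, hM, abs_of_nonneg (by positivity)]
        apply one_div_le_one_div_of_le (by positivity)
        linarith
      have h1 : |Real.log (|x - s|)| * |ρ s| ≤ |Real.log (|x - s|)| * M :=
        mul_le_mul_of_nonneg_left hρle (abs_nonneg _)
      have h2 : (0:ℝ) ≤ K * |ρ s| := by positivity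
      simp only [hbound_def]
      nlinarith [abs_nonneg (ρ s), abs_nonneg (Real.log |x - s|)]
    · have hd : δ ≤ |x - s| := by
        rw [Set.mem_Ioo, not_and_or] at hmem
        push_neg at hmem
        rcases hmem with h | h
        · rw [abs_of_nonneg (by linarith)]; linarith
        · rw [abs_of_nonpos (by linarith)]; linarith
      have hlog_le : Real.log |x - s| ≤ B := by
        rw [hB]
        exact Real.log_le_log (lt_of_lt_of_le hδ0 hd) (by linarith [hxsb s hs])
      have hlog_ge : Real.log δ ≤ Real.log |x - s| := Real.log_le_log hδ0 hd
      have habs : |Real.log (|x - s|)| ≤ K := by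
        rw [hK, abs_le]
        constructor
        · have := neg_abs_le (Real.log δ); linarith
        · have := abs_nonneg (Real.log δ); linarith
      simp only [hbound_def]
      nlinarith [abs_nonneg (ρ s), abs_nonneg (Real.log |x - s|), mul_le_mul_of_nonneg_right habs (abs_nonneg (ρ s))]
  -- bound integrable
  have hρabs : IntervalIntegrable (fun s => |ρ s|) volume 0 b := hρint.abs
  have hbound_int : IntervalIntegrable bound volume 0 b := by
    refine IntervalIntegrable.add ?_ (hρabs.const_mul _)
    exact ((aux_logabs_int hx0 hxb).abs).const_mul M
  have hIoc : Ι (0:ℝ) b = Ioc 0 b := uIoc_of_le hb0.le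
  have hae : ∀ᵐ s : ℝ, s ≠ x := by
    rw [MeasureTheory.ae_iff]
    simp only [ne_eq, not_not, setOf_eq_eq_singleton]
    exact Real.volume_singleton
  have hρm : AEStronglyMeasurable (fun s => (ρ s : ℂ)) (volume.restrict (Ι (0:ℝ) b)) := by
    rw [hIoc]
    exact Complex.continuous_ofReal.comp_aestronglyMeasurable hρint.1.aestronglyMeasurable
  have hFmeas : ∀ᶠ ε : ℝ in 𝓝[>] (0:ℝ), AEStronglyMeasurable
      (fun s : ℝ => Complex.log ((x:ℂ) + ε*Complex.I - s) * (ρ s:ℂ))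
      (volume.restrict (Ι (0:ℝ) b)) := by
    filter_upwards [self_mem_nhdsWithin] with ε (hε : 0 < ε)
    refine AEStronglyMeasurable.mul ?_ hρm
    refine Continuous.aestronglyMeasurable ?_
    refine continuous_iff_continuousAt.2 fun s => ?_
    have hmem : ((x:ℂ) + ε*Complex.I - s) ∈ Complex.slitPlane := by
      refine Complex.mem_slitPlane_iff.2 (Or.inr ?_)
      simp [hε.ne']
    exact ContinuousAt.comp (g := Complex.log)
      (f := fun s : ℝ => (x:ℂ) + ε*Complex.I - (s:ℂ)) (continuousAt_clog hmem)
      (continuous_const.sub Complex.continuous_ofReal).continuousAt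
  have hFbound : ∀ᶠ ε : ℝ in 𝓝[>] (0:ℝ), ∀ᵐ s : ℝ, s ∈ Ι (0:ℝ) b →
      ‖Complex.log ((x:ℂ) + ε*Complex.I - s) * (ρ s:ℂ)‖ ≤ bound s := by
    filter_upwards [Ioc_mem_nhdsGT_of_mem (Set.mem_Ico.2 ⟨le_refl (0:ℝ), one_pos⟩)] with ε hε
    filter_upwards [hae] with s hsx hsI
    rw [hIoc] at hsI
    set w : ℂ := (x:ℂ) + ε*Complex.I - s with hw
    have hre : w.re = x - s := by simp [hw]
    have him : w.im = ε := by simp [hw]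
    have hxs0 : 0 < |x - s| := abs_pos.2 (sub_ne_zero.2 hsx.symm)
    have habs_lb : |x - s| ≤ ‖w‖ := by
      have h := Complex.abs_re_le_norm w
      rw [hre] at h; exact h
    have habs_ub : ‖w‖ ≤ |x - s| + 1 := by
      have h2 := Complex.norm_le_abs_re_add_abs_im w
      rw [hre, him] at h2
      have h3 : |ε| ≤ 1 := by rw [abs_of_pos hε.1]; exact hε.2
      linarith
    have hrlog : |Real.log ‖w‖| ≤ |Real.log (|x - s|)| + B := by
      have h1 : Real.log |x - s| ≤ Real.log ‖w‖ := Real.log_le_log hxs0 habs_lb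
      have h2 : Real.log ‖w‖ ≤ B := by
        rw [hB]
        refine Real.log_le_log (lt_of_lt_of_le hxs0 habs_lb) ?_
        have := hxsb s hsI; linarith
      rw [abs_le]
      constructor
      · have := neg_abs_le (Real.log |x - s|); linarith
      · have := abs_nonneg (Real.log (|x - s|)); linarith
    have hnorm : ‖Complex.log w‖ ≤ |Real.log (|x - s|)| + C := by
      have h3 := Complex.norm_le_abs_re_add_abs_im (Complex.log w)
      rw [Complex.log_re, Complex.log_im] at h3
      have h4 := Complex.abs_arg_le_pi w
      rw [hC]
      linarith
    calc ‖Complex.log w * (ρ s:ℂ)‖ = ‖Complex.log w‖ * |ρ s| := by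
          rw [norm_mul, Complex.norm_real, Real.norm_eq_abs]
      _ ≤ (|Real.log (|x - s|)| + C) * |ρ s| :=
          mul_le_mul_of_nonneg_right hnorm (abs_nonneg _)
      _ ≤ bound s := hcore s hsI
  set f : ℝ → ℂ := fun s => ((Real.log |x - s| * ρ s : ℝ) : ℂ)
      + (Real.pi : ℂ) * Complex.I * (if x < s then (ρ s:ℂ) else 0) with hf
  have hFlim : ∀ᵐ s : ℝ, s ∈ Ι (0:ℝ) b →
      Tendsto (fun ε : ℝ => Complex.log ((x:ℂ) + ε*Complex.I - s) * (ρ s:ℂ))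
        (𝓝[>] (0:ℝ)) (𝓝 (f s)) := by
    filter_upwards [hae] with s hsx _
    have hwt : Tendsto (fun ε : ℝ => (x:ℂ) + ε*Complex.I - s) (𝓝[>] (0:ℝ))
        (𝓝 ((x:ℂ) - s)) := by
      have h : Tendsto (fun ε : ℝ => (x:ℂ) + ε*Complex.I - s) (𝓝 (0:ℝ))
          (𝓝 ((x:ℂ) + (0:ℝ)*Complex.I - s)) := by
        exact ((continuous_const.add (Complex.continuous_ofReal.mul continuous_const)).sub continuous_const).tendsto _
      simpa using h.mono_left nhdsWithin_le_nhds
    rcases lt_or_gt_of_ne hsx with hlt | hgt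
    · -- s < x
      have hmem : ((x:ℂ) - s) ∈ Complex.slitPlane := by
        refine Complex.mem_slitPlane_iff.2 (Or.inl ?_)
        simp only [Complex.sub_re, Complex.ofReal_re]
        linarith
      have ht := ((continuousAt_clog hmem).tendsto.comp hwt).mul_const ((ρ s : ℂ))
      have hval : f s = Complex.log ((x:ℂ) - s) * (ρ s:ℂ) := by
        have h1 : ((x:ℂ) - s) = ((x - s : ℝ) : ℂ) := by push_cast; ring
        have h2 : Complex.log ((x:ℂ) - s) = ((Real.log |x - s| : ℝ) : ℂ) := by
          rw [h1, ← Complex.ofReal_log (by linarith : (0:ℝ) ≤ x - s),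
            abs_of_pos (by linarith : (0:ℝ) < x - s)]
        simp only [hf, if_neg (not_lt.2 hlt.le)]
        rw [h2]; push_cast; ring
      rw [hval]
      exact ht
    · -- x < s
      have hre : ((x - s : ℝ):ℂ).re < 0 := by
        simp only [Complex.ofReal_re]; linarith
      have him : ((x - s : ℝ):ℂ).im = 0 := by simp
      have hlog := Complex.tendsto_log_nhdsWithin_im_nonneg_of_re_neg_of_im_zero hre him
      have hcurve2 : Tendsto (fun ε : ℝ => (x:ℂ) + ε*Complex.I - s) (𝓝[>] (0:ℝ))
          (𝓝[{z : ℂ | 0 ≤ z.im}] ((x - s : ℝ):ℂ)) := by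
        rw [tendsto_nhdsWithin_iff]
        constructor
        · convert hwt using 2
          push_cast; ring
        · filter_upwards [self_mem_nhdsWithin] with ε (hε : 0 < ε)
          simp [hε.le]
      have ht := (hlog.comp hcurve2).mul_const ((ρ s : ℂ))
      have hval : f s = ((Real.log ‖((x - s : ℝ):ℂ)‖ : ℝ) : ℂ)
          * (ρ s:ℂ) + (Real.pi:ℂ) * Complex.I * (ρ s:ℂ) := by
        simp only [hf, if_pos hgt, Complex.norm_real, Real.norm_eq_abs, abs_sub_comm]
        push_cast; ring
      rw [hval]
      convert ht using 2
      · rfl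
      · ring
  have hDCT := intervalIntegral.tendsto_integral_filter_of_dominated_convergence
    (μ := volume) (a := (0:ℝ)) (b := b)
    (F := fun (ε : ℝ) (s : ℝ) => Complex.log ((x:ℂ) + ε*Complex.I - s) * (ρ s:ℂ))
    (f := f) bound hFmeas hFbound hbound_int hFlim
  -- compute the limit integral
  have hint1 : IntervalIntegrable (fun s => Real.log |x - s| * ρ s) volume 0 b := by
    refine hbound_int.mono_fun ?_ ?_
    · rw [hIoc]
      exact ((Real.measurable_log.comp
        (measurable_const.sub measurable_id).abs).aestronglyMeasurable).mul
        hρint.1.aestronglyMeasurable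
    · refine (ae_restrict_iff' measurableSet_uIoc).2 (Filter.Eventually.of_forall fun s hs => ?_)
      rw [hIoc] at hs
      have h1 := hcore s hs
      have h2 : (0:ℝ) ≤ C * |ρ s| := by positivity
      simp only [Real.norm_eq_abs, abs_mul]
      rw [abs_of_nonneg (by positivity : (0:ℝ) ≤ bound s)]
      nlinarith [abs_nonneg (ρ s), abs_nonneg (Real.log (|x - s|))]
  have hint2 : IntervalIntegrable (fun s => if x < s then ρ s else 0) volume 0 b := by
    have heq : (fun s => if x < s then ρ s else 0) = Set.indicator (Ioi x) ρ :=
      funext fun s => by simp [Set.indicator_apply, mem_Ioi]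
    rw [intervalIntegrable_iff, hIoc, heq]
    exact hρint.1.indicator measurableSet_Ioi
  have hv : (∫ s in (0:ℝ)..b, (if x < s then ρ s else 0)) = 1 - Real.sqrt x := by
    have hv1 : IntervalIntegrable (fun s => if x < s then ρ s else 0) volume 0 x :=
      hint2.mono_set (by rw [uIcc_of_le hb0.le, uIcc_of_le hx0.le]
                         exact Icc_subset_Icc le_rfl hxb.le)
    have hv2 : IntervalIntegrable (fun s => if x < s then ρ s else 0) volume x b :=
      hint2.mono_set (by rw [uIcc_of_le hb0.le, uIcc_of_le hxb.le]
                         exact Icc_subset_Icc hx0.le le_rfl)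
    have hsplit := intervalIntegral.integral_add_adjacent_intervals hv1 hv2
    have e1 : (∫ s in (0:ℝ)..x, (if x < s then ρ s else 0)) = 0 := by
      have : (∫ s in (0:ℝ)..x, (if x < s then ρ s else 0)) = ∫ s in (0:ℝ)..x, (0:ℝ) := by
        refine intervalIntegral.integral_congr fun s hs => ?_
        rw [uIcc_of_le hx0.le] at hs
        simp [not_lt.2 hs.2]
      rw [this, intervalIntegral.integral_zero]
    have e2 : (∫ s in x..b, (if x < s then ρ s else 0)) = ∫ s in x..b, ρ s := by
      refine intervalIntegral.integral_congr_ae (Filter.Eventually.of_forall fun s hs => ?_)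
      rw [uIoc_of_le hxb.le] at hs
      simp [hs.1]
    rw [← hsplit, e1, e2, htail]; ring
  have hfint : (∫ s in (0:ℝ)..b, f s)
      = (((∫ s in (0:ℝ)..b, Real.log |x - s| * ρ s : ℝ)):ℂ)
        + (Real.pi:ℂ) * Complex.I * ((1 - Real.sqrt x : ℝ):ℂ) := by
    have hia : IntervalIntegrable (fun s => ((Real.log |x - s| * ρ s : ℝ):ℂ)) volume 0 b := by
      rw [intervalIntegrable_iff] at hint1 ⊢
      exact hint1.ofReal
    have hibr : IntervalIntegrable (fun s => (((if x < s then ρ s else 0 : ℝ)):ℂ)) volume 0 b := by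
      rw [intervalIntegrable_iff] at hint2 ⊢
      exact hint2.ofReal
    have hib : IntervalIntegrable
        (fun s => (Real.pi:ℂ) * Complex.I * (if x < s then (ρ s:ℂ) else 0)) volume 0 b := by
      have heq : (fun s => (Real.pi:ℂ) * Complex.I * (if x < s then (ρ s:ℂ) else 0))
          = fun s => (Real.pi:ℂ) * Complex.I * (((if x < s then ρ s else 0 : ℝ)):ℂ) := by
        funext s; by_cases h : x < s <;> simp [h]
      rw [heq]
      exact hibr.const_mul _
    simp only [hf]
    rw [intervalIntegral.integral_add hia hib, intervalIntegral.integral_const_mul]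
    congr 1
    · exact RCLike.intervalIntegral_ofReal
    · have heq2 : (∫ s in (0:ℝ)..b, (if x < s then (ρ s:ℂ) else 0))
          = ∫ s in (0:ℝ)..b, (((if x < s then ρ s else 0 : ℝ)):ℂ) := by
        refine intervalIntegral.integral_congr fun s _ => ?_
        by_cases h : x < s <;> simp [h]
      have h3 : (∫ s in (0:ℝ)..b, (((if x < s then ρ s else 0 : ℝ)):ℂ))
          = (((∫ s in (0:ℝ)..b, (if x < s then ρ s else 0) : ℝ)):ℂ) :=
        RCLike.intervalIntegral_ofReal
      rw [heq2, h3, hv]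
  have hgeq : (fun ε : ℝ => g ((x:ℂ) + ε * Complex.I))
      = fun ε : ℝ => ∫ s in (0:ℝ)..b, Complex.log ((x:ℂ) + ε*Complex.I - s) * (ρ s:ℂ) :=
    funext fun ε => hg _
  rw [hgeq, ← hfint]
  exact hDCT

/-- In the saturated region `(0,a)`, where the density equals `1/(2√x)`, the boundary
values of `g` are `g±(x) = ∫₀^b log|x−s| ρ(s)ds ± πi(1 − √x)`. -/
theorem stmt_9 (a b : ℝ) (ha : 0 < a) (hab : a < b) (ρ : ℝ → ℝ)
    (hρint : IntervalIntegrable ρ MeasureTheory.volume 0 b)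
    (hρpos : ∀ s ∈ Set.Icc (0 : ℝ) b, 0 ≤ ρ s)
    (hρmass : (∫ s in (0 : ℝ)..b, ρ s) = 1)
    (hρsat : ∀ x ∈ Set.Ioo (0 : ℝ) a, ρ x = 1 / (2 * Real.sqrt x))
    (g : ℂ → ℂ)
    (hg : ∀ z : ℂ, g z = ∫ s in (0 : ℝ)..b, Complex.log (z - (s : ℂ)) * (ρ s : ℂ))
    (x : ℝ) (hx : x ∈ Set.Ioo (0 : ℝ) a) :
    (∀ gp : ℂ, Tendsto g (nhdsWithin (x : ℂ) {z : ℂ | 0 < z.im}) (nhds gp) →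
      gp = ((∫ s in (0 : ℝ)..b, Real.log |x - s| * ρ s : ℝ) : ℂ)
        + (Real.pi : ℂ) * Complex.I * ((1 - Real.sqrt x : ℝ) : ℂ)) ∧
    (∀ gm : ℂ, Tendsto g (nhdsWithin (x : ℂ) {z : ℂ | z.im < 0}) (nhds gm) →
      gm = ((∫ s in (0 : ℝ)..b, Real.log |x - s| * ρ s : ℝ) : ℂ)
        - (Real.pi : ℂ) * Complex.I * ((1 - Real.sqrt x : ℝ) : ℂ)) := by
  obtain ⟨hx0, hxa⟩ := hx
  have hxb : x < b := hxa.trans hab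
  have hb0 : (0:ℝ) < b := hx0.trans hxb
  set L : ℂ := ((∫ s in (0 : ℝ)..b, Real.log |x - s| * ρ s : ℝ) : ℂ)
        + (Real.pi : ℂ) * Complex.I * ((1 - Real.sqrt x : ℝ) : ℂ) with hL
  have key : Tendsto (fun ε : ℝ => g ((x:ℂ) + ε * Complex.I)) (𝓝[>] (0:ℝ)) (𝓝 L) :=
    aux_key a b ha hab ρ hρint hρpos hρmass hρsat g hg x hx0 hxa
  have hconj : ∀ᶠ ε : ℝ in 𝓝[>] (0:ℝ),
      g ((starRingEnd ℂ) ((x:ℂ) + ε * Complex.I)) = (starRingEnd ℂ) (g ((x:ℂ) + ε * Complex.I)) := by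
    filter_upwards [self_mem_nhdsWithin] with ε (hε : 0 < ε)
    rw [hg, hg]
    have hcig : ∀ (F : ℝ → ℂ), (∫ s in (0:ℝ)..b, (starRingEnd ℂ) (F s))
        = (starRingEnd ℂ) (∫ s in (0:ℝ)..b, F s) := by
      intro F
      simp only [intervalIntegral, integral_conj, ← map_sub]
    rw [← hcig]
    refine intervalIntegral.integral_congr fun s hs => ?_
    simp only [map_mul, Complex.conj_ofReal]
    congr 1
    have harg : ((x:ℂ) + ε * Complex.I - s).arg ≠ Real.pi := by
      simp only [ne_eq, Complex.arg_eq_pi_iff]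
      simp only [Complex.add_im, Complex.sub_im, Complex.ofReal_im, Complex.mul_im,
        Complex.I_im, Complex.I_re, Complex.ofReal_re, not_and]
      intro _; intro h; nlinarith [h]
    rw [← Complex.log_conj _ harg]
    congr 1
    simp [map_sub, map_add, Complex.conj_ofReal]
  constructor
  · intro gp hgp
    have hcurve : Tendsto (fun ε : ℝ => (x:ℂ) + ε * Complex.I) (𝓝[>] (0:ℝ))
        (𝓝[{z : ℂ | 0 < z.im}] (x:ℂ)) := by
      rw [tendsto_nhdsWithin_iff]
      constructor
      · have : Tendsto (fun ε : ℝ => (x:ℂ) + ε * Complex.I) (𝓝 (0:ℝ)) (𝓝 ((x:ℂ) + 0 * Complex.I)) :=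
          (continuous_const.add (Complex.continuous_ofReal.mul continuous_const)).tendsto 0
        simpa using this.mono_left nhdsWithin_le_nhds
      · filter_upwards [self_mem_nhdsWithin] with ε (hε : 0 < ε)
        simpa using hε
    exact tendsto_nhds_unique (hgp.comp hcurve) key
  · intro gm hgm
    have hcurve : Tendsto (fun ε : ℝ => (starRingEnd ℂ) ((x:ℂ) + ε * Complex.I)) (𝓝[>] (0:ℝ))
        (𝓝[{z : ℂ | z.im < 0}] (x:ℂ)) := by
      rw [tendsto_nhdsWithin_iff]
      constructor
      · have : Tendsto (fun ε : ℝ => (starRingEnd ℂ) ((x:ℂ) + ε * Complex.I)) (𝓝 (0:ℝ))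
            (𝓝 ((starRingEnd ℂ) ((x:ℂ) + 0 * Complex.I))) :=
          (Complex.continuous_conj.comp
            (continuous_const.add (Complex.continuous_ofReal.mul continuous_const))).tendsto 0
        simpa [Complex.conj_ofReal] using this.mono_left nhdsWithin_le_nhds
      · filter_upwards [self_mem_nhdsWithin] with ε (hε : 0 < ε)
        simp [hε]
    have hlim2 : Tendsto (fun ε : ℝ => g ((starRingEnd ℂ) ((x:ℂ) + ε * Complex.I)))
        (𝓝[>] (0:ℝ)) (𝓝 ((starRingEnd ℂ) L)) := by
      refine Tendsto.congr' (hconj.mono fun ε h => h.symm) ?_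
      exact (Complex.continuous_conj.tendsto L).comp key
    have := tendsto_nhds_unique (hgm.comp hcurve) hlim2
    rw [this, hL]
    simp only [map_add, map_mul, Complex.conj_ofReal, Complex.conj_I]
    ring
end
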